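/- For 0 ≤ p < q ≤ 1, the binary relative entropy satisfies kl(p,q) ≥ (p−q)² / (2·max_{x∈[p,q]} x(1−x)). -/

import Mathlib

open Real

/-- Binary relative entropy `kl(p,q)` between Bernoulli(p) and Bernoulli(q), valued in
`EReal` so that the conventions `0·log 0 = 0` and `x·log(x/0) = +∞` (for `x > 0`) hold. -/
noncomputable def klBin (p q : ℝ) : EReal :=
  if (q = 0 ∧ 0 < p) ∨ (q = 1 ∧ p < 1) then ⊤
  else ((p * Real.log (p / q) + (1 - p) * Real.log ((1 - p) / (1 - q)) : ℝ) : EReal)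

lemma key (p q : ℝ) (hp : 0 ≤ p) (hpq : p < q) (hq : q < 1) :
    (p - q) ^ 2 / (2 * sSup ((fun x => x * (1 - x)) '' Set.Icc p q)) ≤
      p * Real.log (p / q) + (1 - p) * Real.log ((1 - p) / (1 - q)) := by
  set M := sSup ((fun x => x * (1 - x)) '' Set.Icc p q) with hMdef
  have hcont : ContinuousOn (fun x : ℝ => x * (1 - x)) (Set.Icc p q) := by fun_prop
  have hbdd : BddAbove ((fun x : ℝ => x * (1 - x)) '' Set.Icc p q) :=
    (isCompact_Icc.image_of_continuousOn hcont).bddAbove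
  have hub : ∀ x ∈ Set.Icc p q, x * (1 - x) ≤ M := fun x hx =>
    le_csSup hbdd ⟨x, hx, rfl⟩
  have hm : (p + q) / 2 ∈ Set.Icc p q := ⟨by linarith, by linarith⟩
  have hMpos : 0 < M := by
    have := hub _ hm
    nlinarith [this]
  set H : ℝ → ℝ := fun x => -(p * Real.log x) - (1 - p) * Real.log (1 - x)
      - (x - p) ^ 2 / (2 * M) with hHdef
  have hcontH : ContinuousOn H (Set.Icc p q) := by
    have h2 : ContinuousOn (fun x : ℝ => (1 - p) * Real.log (1 - x)) (Set.Icc p q) := by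
      apply ContinuousOn.mul continuousOn_const
      apply (Real.continuousOn_log.comp (by fun_prop))
      intro x hx
      simp only [Set.mem_compl_iff, Set.mem_singleton_iff]
      have : x ≤ q := hx.2
      intro h; linarith
    have h3 : ContinuousOn (fun x : ℝ => (x - p) ^ 2 / (2 * M)) (Set.Icc p q) := by
      fun_prop
    rcases eq_or_lt_of_le hp with h0 | h0
    · have h1 : ContinuousOn (fun x : ℝ => -(p * Real.log x)) (Set.Icc p q) := by
        subst h0; simpa using continuousOn_const (c := (0:ℝ))
      exact (h1.sub h2).sub h3
    · have h1 : ContinuousOn (fun x : ℝ => -(p * Real.log x)) (Set.Icc p q) := by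
        apply ContinuousOn.neg
        apply ContinuousOn.mul continuousOn_const
        apply Real.continuousOn_log.mono
        intro x hx
        simp only [Set.mem_compl_iff, Set.mem_singleton_iff]
        have : p ≤ x := hx.1
        intro h; linarith
      exact (h1.sub h2).sub h3
  have hderiv : ∀ x ∈ Set.Ioo p q, HasDerivAt H
      (-(p * x⁻¹) - (1 - p) * ((1 - x)⁻¹ * (0 - 1)) - (2 * (x - p) ^ 1 * 1) / (2 * M)) x := by
    intro x hx
    have hx0 : 0 < x := lt_of_le_of_lt hp hx.1
    have hx1 : x < 1 := lt_trans hx.2 hq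
    have d1 : HasDerivAt (fun x : ℝ => p * Real.log x) (p * x⁻¹) x :=
      (Real.hasDerivAt_log (ne_of_gt hx0)).const_mul p
    have d2 : HasDerivAt (fun x : ℝ => Real.log (1 - x)) ((1 - x)⁻¹ * (0 - 1)) x := by
      have : HasDerivAt (fun x : ℝ => (1 : ℝ) - x) (0 - 1) x :=
        (hasDerivAt_const x 1).sub (hasDerivAt_id x)
      exact (Real.hasDerivAt_log (by intro h; nlinarith [h])).comp x this
    have d3 : HasDerivAt (fun x : ℝ => (x - p) ^ 2 / (2 * M)) ((2 * (x - p) ^ 1 * 1) / (2 * M)) x := by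
      have : HasDerivAt (fun x : ℝ => x - p) 1 x := (hasDerivAt_id x).sub_const p
      exact (this.pow 2).div_const (2 * M)
    exact (d1.neg.sub (d2.const_mul (1 - p))).sub d3
  have hmono : MonotoneOn H (Set.Icc p q) := by
    apply monotoneOn_of_deriv_nonneg (convex_Icc p q) hcontH
    · rw [interior_Icc]
      exact fun x hx => ((hderiv x hx).differentiableAt).differentiableWithinAt
    · rw [interior_Icc]
      intro x hx
      rw [(hderiv x hx).deriv]
      have hx0 : 0 < x := lt_of_le_of_lt hp hx.1
      have hx1 : x < 1 := lt_trans hx.2 hq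
      have hxx : 0 < x * (1 - x) := by nlinarith
      have hle : x * (1 - x) ≤ M := hub x ⟨le_of_lt hx.1, le_of_lt hx.2⟩
      have h1x : (1 : ℝ) - x ≠ 0 := by linarith
      have hx0' : x ≠ 0 := ne_of_gt hx0
      have heq : -(p * x⁻¹) - (1 - p) * ((1 - x)⁻¹ * (0 - 1)) = (x - p) / (x * (1 - x)) := by
        field_simp
        ring
      have hcmp : (x - p) / M ≤ (x - p) / (x * (1 - x)) :=
        div_le_div_of_nonneg_left (by linarith [hx.1]) hxx hle
      rw [heq]
      have : (2 * (x - p) ^ 1 * 1) / (2 * M) = (x - p) / M := by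
        field_simp
      rw [this]
      linarith
  have hHpq : H p ≤ H q :=
    hmono ⟨le_refl p, le_of_lt hpq⟩ ⟨le_of_lt hpq, le_refl q⟩ (le_of_lt hpq)
  have hlog2 : Real.log ((1 - p) / (1 - q)) = Real.log (1 - p) - Real.log (1 - q) :=
    Real.log_div (by intro h; nlinarith [h]) (by intro h; nlinarith [h])
  have hlog1 : p * Real.log (p / q) = p * Real.log p - p * Real.log q := by
    rcases eq_or_lt_of_le hp with h0 | h0
    · simp [← h0]
    · rw [Real.log_div (ne_of_gt h0) (ne_of_gt (lt_of_le_of_lt hp hpq))]; ring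
  simp only [hHdef] at hHpq
  rw [hlog1, hlog2]
  have hsq : (p - q) ^ 2 = (q - p) ^ 2 := by ring
  have hpp : (p - p) ^ 2 / (2 * M) = 0 := by simp
  rw [hsq]
  nlinarith [hHpq]

/-- Binary relative entropy `kl(p,q)` between Bernoulli(p) and Bernoulli(q), valued in
`EReal`. -/
theorem stmt4 (p q : ℝ) (hp : 0 ≤ p) (hpq : p < q) (hq : q ≤ 1) :
    klBin p q ≥
      (((p - q) ^ 2 / (2 * sSup ((fun x => x * (1 - x)) '' Set.Icc p q)) : ℝ) : EReal) := by
  rcases eq_or_lt_of_le hq with h1 | h1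
  · have : klBin p q = ⊤ := by
      rw [klBin, if_pos]
      right
      exact ⟨h1, lt_of_lt_of_le hpq hq⟩
    rw [this]
    exact le_top
  · have hklv : klBin p q = ((p * Real.log (p / q)
        + (1 - p) * Real.log ((1 - p) / (1 - q)) : ℝ) : EReal) := by
      rw [klBin, if_neg]
      rintro (⟨h0, -⟩ | ⟨h0, -⟩)
      · exact absurd h0 (ne_of_gt (lt_of_le_of_lt hp hpq))
      · exact absurd h0 (ne_of_lt h1)
    rw [hklv, ge_iff_le, EReal.coe_le_coe_iff]
    exact key p q hp hpq h1
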